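/- Fix an integer k ≥ 1 and an ordinal α. The converse of the one-step extension relation ≻₁ on k-Tr(α) is well-founded, and the ordinal rank of the empty tree Nil in k-Tr(α) with respect to ≻₁ (where rank(T) = sup{ rank(T') + 1 : T' ≻₁ T }) equals hNil_k(α); in particular, the rank of Nil in k-Tr(α) equals sup{ (rank of Nil in k-Tr(β)) * k + 1 : β < α }, where γ * k denotes the k-fold natural (Hessenberg) sum of γ with itself. -/

import Mathlib

/-- Natural (Hessenberg) addition of ordinals, as defined in the older Mathlib
(removed from current Mathlib). -/
noncomputable def Ordinal.nadd : Ordinal.{u} → Ordinal.{u} → Ordinal.{u}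
  | a, b =>
    max (Ordinal.blsub.{u, u} a fun a' _ => Ordinal.nadd a' b)
      (Ordinal.blsub.{u, u} b fun b' _ => Ordinal.nadd a b')
termination_by a b => (a, b)
decreasing_by
  · exact Prod.Lex.left _ _ ‹_›
  · exact Prod.Lex.right _ ‹_›

/-- `nmulNat γ k` is the `k`-fold natural (Hessenberg) sum `γ ⊕ ⋯ ⊕ γ`. -/
noncomputable def nmulNat (γ : Ordinal) : ℕ → Ordinal
  | 0 => 0
  | n + 1 => Ordinal.nadd (nmulNat γ n) γ

/-- `hNil k α = sup { hNil k β * k + 1 : β < α }`, where `* k` is the `k`-fold natural sum. -/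
noncomputable def hNil (k : ℕ) (α : Ordinal) : Ordinal :=
  ⨆ β : Set.Iio α, nmulNat (hNil k β.1) k + 1
termination_by α
decreasing_by exact β.2
/-- Finite `k`-branching trees with ordinal labels: every node has `k` ordered child
positions, each vacant (`nil`) or occupied by a child node. -/
inductive KTree (k : ℕ) : Type 1 where
  | nil : KTree k
  | node : Ordinal → (Fin k → KTree k) → KTree k

/-- `T.Valid α` : every label is `< α` and every child's label is strictly smaller than
its parent's label; i.e. `T ∈ k-Tr(α)`. -/
def KTree.Valid {k : ℕ} : KTree k → Ordinal → Prop
  | .nil, _ => True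
  | .node β ts, α => β < α ∧ ∀ i, (ts i).Valid β

/-- One-step extension `T' ≻₁ T`: `T'` is obtained from `T` by adding exactly one node
(at a vacant child position, or as the root when `T` is empty). -/
inductive KTree.Ext1 {k : ℕ} : KTree k → KTree k → Prop
  | root (β : Ordinal) : Ext1 (.node β fun _ => .nil) .nil
  | child {β : Ordinal} {ts' ts : Fin k → KTree k} (i : Fin k) :
      Ext1 (ts' i) (ts i) → (∀ j, j ≠ i → ts' j = ts j) → Ext1 (.node β ts') (.node β ts)

/-- Natural (Hessenberg) sum of a finite family of ordinals. -/
noncomputable def natSumFin {k : ℕ} (f : Fin k → Ordinal) : Ordinal :=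
  (List.ofFn f).foldr Ordinal.nadd 0

/-- `hAux T α`: for nonempty `T` this is the natural sum, over all vacant child positions
of `T`, of `hNil k β` where `β` is the label of the node owning that vacant position;
`hAux nil α = hNil k α`.  This is the function `h_k(·, α)`. -/
noncomputable def hAux {k : ℕ} : KTree k → Ordinal → Ordinal
  | .nil, α => hNil k α
  | .node β ts, _ => natSumFin fun i => hAux (ts i) β

/-- The rank of an element under a well-founded relation:
`rank x = sup { rank y + 1 : r y x }`. -/
noncomputable def WFRank {α : Type*} {r : α → α → Prop} (hwf : WellFounded r) (a : α) :
    Ordinal := (hwf.apply a).rank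

/-! ### Auxiliary lemmas -/

lemma nadd_def (a b : Ordinal.{u}) : Ordinal.nadd a b =
    max (Ordinal.blsub.{u, u} a fun a' _ => Ordinal.nadd a' b)
      (Ordinal.blsub.{u, u} b fun b' _ => Ordinal.nadd a b') := by
  rw [Ordinal.nadd]

lemma nadd_lt_nadd_right' {a' a : Ordinal.{u}} (h : a' < a) (b : Ordinal.{u}) :
    Ordinal.nadd a' b < Ordinal.nadd a b := by
  rw [nadd_def a b]
  exact lt_max_of_lt_left (Ordinal.lt_blsub _ _ h)

lemma nadd_lt_nadd_left' {b' b : Ordinal.{u}} (h : b' < b) (a : Ordinal.{u}) :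
    Ordinal.nadd a b' < Ordinal.nadd a b := by
  rw [nadd_def a b]
  exact lt_max_of_lt_right (Ordinal.lt_blsub _ _ h)

lemma nadd_le_nadd_right' {a' a : Ordinal.{u}} (h : a' ≤ a) (b : Ordinal.{u}) :
    Ordinal.nadd a' b ≤ Ordinal.nadd a b :=
  (StrictMono.monotone (fun _ _ h' => nadd_lt_nadd_right' h' b)) h

lemma nadd_le_nadd_left' {b' b : Ordinal.{u}} (h : b' ≤ b) (a : Ordinal.{u}) :
    Ordinal.nadd a b' ≤ Ordinal.nadd a b :=
  (StrictMono.monotone (fun _ _ h' => nadd_lt_nadd_left' h' a)) h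

lemma lt_nadd_iff' {ξ a b : Ordinal.{u}} :
    ξ < Ordinal.nadd a b ↔
      (∃ a' < a, ξ ≤ Ordinal.nadd a' b) ∨ ∃ b' < b, ξ ≤ Ordinal.nadd a b' := by
  rw [nadd_def a b, lt_max_iff, Ordinal.lt_blsub_iff, Ordinal.lt_blsub_iff]
  simp only [exists_prop]

theorem nadd_comm' : ∀ a b : Ordinal.{u}, Ordinal.nadd a b = Ordinal.nadd b a
  | a, b => by
    rw [nadd_def a b, nadd_def b a, max_comm]
    congr 1
    · congr 1
      funext c hc
      exact nadd_comm' a c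
    · congr 1
      funext c hc
      exact nadd_comm' c b
termination_by a b => (a, b)
decreasing_by
  · exact Prod.Lex.right _ ‹_›
  · exact Prod.Lex.left _ _ ‹_›

lemma natSumFin_succ {n : ℕ} (f : Fin (n + 1) → Ordinal) :
    natSumFin f = Ordinal.nadd (f 0) (natSumFin fun i => f i.succ) := by
  simp [natSumFin, List.ofFn_succ]

lemma natSumFin_lt_exists : ∀ {k : ℕ} (f : Fin k → Ordinal.{u}) (ξ : Ordinal.{u}),
    ξ < natSumFin f → ∃ i, ∃ η < f i, ∀ x, η ≤ x → ξ ≤ natSumFin (Function.update f i x) := by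
  intro k
  induction k with
  | zero =>
    intro f ξ h
    simp [natSumFin] at h
  | succ n ih =>
    intro f ξ h
    rw [natSumFin_succ] at h
    rcases lt_nadd_iff'.1 h with ⟨a', ha', hle⟩ | ⟨b', hb', hle⟩
    · refine ⟨0, a', ha', fun x hx => ?_⟩
      rw [natSumFin_succ, Function.update_self]
      have e : (fun i : Fin n => Function.update f 0 x i.succ) = fun i => f i.succ :=
        funext fun i => Function.update_of_ne (Fin.succ_ne_zero i) _ _
      rw [e]
      exact hle.trans (nadd_le_nadd_right' hx _)
    · obtain ⟨i, η, hη, H⟩ := ih (fun i => f i.succ) b' hb'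
      refine ⟨i.succ, η, hη, fun x hx => ?_⟩
      rw [natSumFin_succ, Function.update_of_ne (Fin.succ_ne_zero i).symm]
      have e : (fun j : Fin n => Function.update f i.succ x j.succ)
          = Function.update (fun j => f j.succ) i x := by
        funext j
        simp only [Function.update_apply, Fin.succ_inj]
      rw [e]
      exact hle.trans (nadd_le_nadd_left' (H x hx) _)

lemma natSumFin_const (k : ℕ) (γ : Ordinal.{1}) :
    natSumFin (fun _ : Fin k => γ) = nmulNat γ k := by
  induction k with
  | zero => rfl
  | succ n ih =>
    rw [natSumFin_succ, ih, nmulNat, nadd_comm']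

lemma natSumFin_lt : ∀ {k : ℕ} {f g : Fin k → Ordinal.{1}} (i : Fin k), f i < g i →
    (∀ j, j ≠ i → f j = g j) → natSumFin f < natSumFin g := by
  intro k
  induction k with
  | zero => intro f g i; exact i.elim0
  | succ n ih =>
    intro f g i hi hj
    rw [natSumFin_succ, natSumFin_succ]
    cases i using Fin.cases with
    | zero =>
      rw [show (fun j : Fin n => f j.succ) = fun j => g j.succ from
        funext fun j => hj _ (Fin.succ_ne_zero j)]
      exact nadd_lt_nadd_right' hi _
    | succ i =>
      rw [hj 0 (Fin.succ_ne_zero i).symm]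
      exact nadd_lt_nadd_left'
        (ih (f := fun j => f j.succ) (g := fun j => g j.succ) i hi
          (fun j hj' => hj _ (fun e => hj' (Fin.succ_injective _ e)))) _

lemma hNil_le {k : ℕ} {β α : Ordinal.{0}} (h : β < α) :
    nmulNat.{1} (hNil.{0,1} k β) k + 1 ≤ hNil.{0,1} k α := by
  conv_rhs => rw [hNil]
  exact Ordinal.le_iSup (fun β : Set.Iio α => nmulNat.{1} (hNil.{0,1} k β.1) k + 1) ⟨β, h⟩

lemma lt_hNil {k : ℕ} {α : Ordinal.{0}} {ξ : Ordinal.{1}} (h : ξ < hNil.{0,1} k α) :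
    ∃ β < α, ξ ≤ nmulNat.{1} (hNil.{0,1} k β) k := by
  rw [hNil, Ordinal.lt_iSup_iff] at h
  obtain ⟨⟨β, hβ⟩, h⟩ := h
  refine ⟨β, hβ, ?_⟩
  rwa [Ordinal.add_one_eq_succ, Order.lt_succ_iff] at h

lemma hAux_lt {k : ℕ} {T' T : KTree k} (h : T'.Ext1 T) :
    ∀ γ : Ordinal.{0}, T'.Valid γ → hAux.{1} T' γ < hAux.{1} T γ := by
  induction h with
  | root β =>
    intro γ hv
    have hβ : β < γ := hv.1
    have e : hAux.{1} (k := k) (KTree.node β fun _ => KTree.nil) γ = nmulNat (hNil.{0,1} k β) k := by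
      simp only [hAux]; exact natSumFin_const k _
    rw [e]
    show _ < hAux.{1} KTree.nil γ
    simp only [hAux]
    refine lt_of_lt_of_le ?_ (hNil_le hβ)
    rw [Ordinal.add_one_eq_succ]
    exact Order.lt_succ _
  | @child β ts' ts i hext heq ih =>
    intro γ hv
    simp only [hAux]
    exact natSumFin_lt i (ih β (hv.2 i)) (fun j hj => by rw [heq j hj])

lemma hAux_exists {k : ℕ} (T : KTree k) :
    ∀ γ : Ordinal.{0}, T.Valid γ → ∀ ξ : Ordinal.{1}, ξ < hAux.{1} T γ →
      ∃ T', T'.Ext1 T ∧ T'.Valid γ ∧ ξ ≤ hAux.{1} T' γ := by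
  induction T with
  | nil =>
    intro γ _ ξ hξ
    simp only [hAux] at hξ
    obtain ⟨β, hβ, hle⟩ := lt_hNil hξ
    refine ⟨KTree.node β fun _ => KTree.nil, KTree.Ext1.root β, ⟨hβ, fun _ => trivial⟩, ?_⟩
    have e : hAux.{1} (k := k) (KTree.node β fun _ => KTree.nil) γ = nmulNat (hNil.{0,1} k β) k := by
      simp only [hAux]; exact natSumFin_const k _
    rw [e]; exact hle
  | node β ts ih =>
    intro γ hv ξ hξ
    simp only [hAux] at hξ
    obtain ⟨i, η, hη, H⟩ := natSumFin_lt_exists _ ξ hξ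
    obtain ⟨T'', hext, hval, hle2⟩ := ih i β (hv.2 i) η hη
    refine ⟨KTree.node β (Function.update ts i T''), KTree.Ext1.child i ?_ ?_, ⟨hv.1, ?_⟩, ?_⟩
    · rw [Function.update_self]; exact hext
    · intro j hj; rw [Function.update_of_ne hj]
    · intro j; rcases eq_or_ne j i with rfl | hj
      · rw [Function.update_self]; exact hval
      · rw [Function.update_of_ne hj]; exact hv.2 j
    · simp only [hAux]
      have e1 : (fun j => hAux.{1} (Function.update ts i T'' j) β)
          = Function.update (fun j => hAux.{1} (ts j) β) i (hAux.{1} T'' β) := by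
        funext j
        rcases eq_or_ne j i with rfl | hj
        · rw [Function.update_self, Function.update_self]
        · rw [Function.update_of_ne hj, Function.update_of_ne hj]
      rw [e1]
      exact H _ hle2

lemma rank_eq_hAux {k : ℕ}
    (hwf : ∀ γ : Ordinal.{0},
      WellFounded fun T' T : {T : KTree k // T.Valid γ} => T'.1.Ext1 T.1)
    (γ : Ordinal.{0}) (x : {T : KTree k // T.Valid γ}) :
    WFRank (hwf γ) x = hAux.{1} x.1 γ := by
  refine (hwf γ).induction (C := fun x => WFRank (hwf γ) x = hAux.{1} x.1 γ) x ?_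
  intro x ih
  have h1 : WFRank (hwf γ) x
      = ⨆ y : {y : {T : KTree k // T.Valid γ} // y.1.Ext1 x.1},
          Order.succ (WFRank (hwf γ) y.1) := by
    rw [WFRank, Acc.rank_eq]
    rfl
  rw [h1]
  apply le_antisymm
  · apply Ordinal.iSup_le
    intro y
    rw [ih y.1 y.2, Order.succ_le_iff]
    exact hAux_lt y.2 γ y.1.2
  · by_contra hc
    push_neg at hc
    obtain ⟨T', hext, hval, hle⟩ := hAux_exists x.1 γ x.2 _ hc
    have h2 : Order.succ (WFRank (hwf γ) ⟨T', hval⟩)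
        ≤ ⨆ y : {y : {T : KTree k // T.Valid γ} // y.1.Ext1 x.1},
            Order.succ (WFRank (hwf γ) y.1) :=
      Ordinal.le_iSup.{1} _ (⟨⟨T', hval⟩, hext⟩ :
        {y : {T : KTree k // T.Valid γ} // y.1.Ext1 x.1})
    rw [ih ⟨T', hval⟩ hext] at h2
    exact absurd (lt_of_lt_of_le (Order.lt_succ (hAux.{1} T' γ)) (h2.trans hle))
      (lt_irrefl _)

/-- the converse of one-step extension `≻₁` on `k-Tr(α)` is well-founded, the
ordinal rank of the empty tree `Nil` in `k-Tr(α)` equals `hNil k α`, and in particular it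
equals `sup { (rank of Nil in k-Tr(β)) * k + 1 : β < α }` with `* k` the `k`-fold natural
sum. -/
theorem stmt_6 (k : ℕ) (hk : 1 ≤ k) (α : Ordinal) :
    ∃ hwf : ∀ γ : Ordinal,
        WellFounded (fun T' T : {T : KTree k // T.Valid γ} => T'.1.Ext1 T.1),
      WFRank (hwf α) ⟨KTree.nil, trivial⟩ = hNil k α ∧
      WFRank (hwf α) ⟨KTree.nil, trivial⟩ =
        sSup {o : Ordinal | ∃ β < α,
          o = nmulNat (WFRank (hwf β) ⟨KTree.nil, trivial⟩) k + 1} := by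
  have hwf : ∀ γ : Ordinal.{0},
      WellFounded fun T' T : {T : KTree k // T.Valid γ} => T'.1.Ext1 T.1 := fun γ =>
    have hwf' : WellFounded (InvImage ((· < ·) : Ordinal.{1} → Ordinal.{1} → Prop)
        (fun T : {T : KTree k // T.Valid γ} => hAux.{1} T.1 γ)) :=
      InvImage.wf _ Ordinal.lt_wf
    Subrelation.wf (fun {x y} h => hAux_lt h γ x.2) hwf'
  have h2 : ∀ β : Ordinal.{0},
      WFRank (hwf β) ⟨KTree.nil, trivial⟩ = hNil.{0,1} k β := fun β => by
    rw [rank_eq_hAux hwf β ⟨KTree.nil, trivial⟩]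
    simp [hAux]
  refine ⟨hwf, h2 α, ?_⟩
  rw [h2 α]
  have hset : {o : Ordinal.{1} | ∃ β < α,
        o = nmulNat (WFRank (hwf β) ⟨KTree.nil, trivial⟩) k + 1}
      = Set.range (fun β : Set.Iio α => nmulNat.{1} (hNil.{0,1} k β.1) k + 1) := by
    ext o
    constructor
    · rintro ⟨β, hβ, rfl⟩; exact ⟨⟨β, hβ⟩, by rw [h2 β]⟩
    · rintro ⟨⟨β, hβ⟩, rfl⟩; exact ⟨β, hβ, by rw [h2 β]⟩
  rw [hset]
  rw [hNil]
  rfl
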